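/- Let C be a satisfiable set of Horn clauses over a finite set X with the complete pebbling marking. Then a variable x ∈ X is forced to true by C (i.e., v(x) = true in every satisfying valuation) if and only if x is marked '*'. -/

import Mathlib

structure HornClause (V : Type) where
  prem : Finset V
  concl : Option V

def HornClause.sat {V : Type} (v : V → Bool) (c : HornClause V) : Prop :=
  (∀ x ∈ c.prem, v x = true) → ∃ y, c.concl = some y ∧ v y = true

def SatAll {V : Type} (v : V → Bool) (C : Set (HornClause V)) : Prop :=
  ∀ c ∈ C, c.sat v

/-- `Marked C x` : variable x receives mark '*' via a finite pebbling sequence.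
(Clauses `true ⟹ x` have empty premise set, i.e. premise True.) -/
inductive Marked {V : Type} (C : Set (HornClause V)) : V → Prop
  | step (c : HornClause V) (hc : c ∈ C) (y : V) (hy : c.concl = some y)
      (h : ∀ x ∈ c.prem, Marked C x) : Marked C y

/-- `MarkedRel C z y` : variable y receives the relative mark '*z'. The mark
'*z' starts at z itself and propagates along a clause when all premises are
marked '*' or '*z' (the premises carrying mark '*z' are collected in S). -/
inductive MarkedRel {V : Type} (C : Set (HornClause V)) (z : V) : V → Prop
  | self : MarkedRel C z z
  | step (c : HornClause V) (hc : c ∈ C) (y : V) (hy : c.concl = some y)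
      (S : Finset V) (hS : ∀ x ∈ c.prem, x ∈ S ∨ Marked C x)
      (h : ∀ x ∈ S, MarkedRel C z x) : MarkedRel C z y

/-- False is marked '*' : some clause with conclusion false has all premises marked '*'. -/
def BotMarked {V : Type} (C : Set (HornClause V)) : Prop :=
  ∃ c ∈ C, c.concl = none ∧ ∀ x ∈ c.prem, Marked C x

/-- False is marked '*z' : some clause with conclusion false has all premises
marked '*' or '*z'. -/
def BotMarkedRel {V : Type} (C : Set (HornClause V)) (z : V) : Prop :=
  ∃ c ∈ C, c.concl = none ∧ ∀ x ∈ c.prem, Marked C x ∨ MarkedRel C z x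

/-- For a satisfiable Horn set, a variable x is forced to true iff x is marked
'*' in the complete marking. -/
theorem stmt9 {V : Type} [Fintype V] (C : Set (HornClause V))
    (hsat : ∃ v : V → Bool, SatAll v C) (x : V) :
    (∀ v : V → Bool, SatAll v C → v x = true) ↔ Marked C x := by
  classical
  constructor
  · intro hforced
    set v : V → Bool := fun y => decide (Marked C y) with hv
    have hsatv : SatAll v C := by
      intro c hc hprem
      have hallM : ∀ x ∈ c.prem, Marked C x := by
        intro x hx
        have := hprem x hx
        simpa [hv] using this
      cases hconcl : c.concl with
      | none =>
        exfalso
        obtain ⟨v₀, hv₀⟩ := hsat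
        have hM : ∀ x, Marked C x → v₀ x = true := by
          intro x hx
          induction hx with
          | step c' hc' y hy h ih =>
            obtain ⟨y', hy', hvy'⟩ := hv₀ c' hc' ih
            rw [hy] at hy'; cases hy'; exact hvy'
        obtain ⟨y, hy, _⟩ := hv₀ c hc (fun x hx => hM x (hallM x hx))
        rw [hconcl] at hy; exact nomatch hy
      | some y =>
        exact ⟨y, rfl, by simp [hv, Marked.step c hc y hconcl hallM]⟩
    have := hforced v hsatv
    simpa [hv] using this
  · intro hm v hsv
    induction hm with
    | step c hc y hy h ih =>
      obtain ⟨y', hy', hvy'⟩ := hsv c hc ih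
      rw [hy] at hy'; cases hy'; exact hvy'
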